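/- Let G be a finite directed acyclic graph with vertex set 𝐕 in which every vertex has state space ℝ. For any path intervention π_{𝔞_𝛂} on a proper set of directed paths 𝛂 with real value assignments, and any vertex set 𝐘, the joint distribution of the responses {Y(𝔞_𝛂) : Y ∈ 𝐘} is identified under the linear structural equation model for G: any two linear SEM structures for G inducing the same observed distribution p(𝐕) induce the same joint distribution of {Y(𝔞_𝛂) : Y ∈ 𝐘}. -/

import Mathlib

open scoped Classical
open MeasureTheory

namespace CausalHierarchy

variable {V : Type}

/-- A directed path in a directed graph with edge relation `edge`:
a nonempty list of vertices in which each consecutive pair is joined by an edge. -/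
structure DiPath (edge : V → V → Prop) : Type where
  verts : List V
  ne : verts ≠ []
  chain : verts.Chain' edge

namespace DiPath

variable {edge : V → V → Prop}

/-- The source (first vertex) of a directed path. -/
def src (p : DiPath edge) : V := p.verts.head p.ne

/-- The sink (last vertex) of a directed path. -/
def sink (p : DiPath edge) : V := p.verts.getLast p.ne

/-- The second vertex of a directed path (junk value for single-vertex paths). -/
def snd2 (p : DiPath edge) : V := p.verts.tail.headD p.src

/-- The first edge of a directed path, as an ordered pair of vertices. -/
def firstEdge (p : DiPath edge) : V × V := (p.src, p.snd2)

/-- `q` is a (contiguous) subpath of `p`. -/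
def Subpath (q p : DiPath edge) : Prop := ∃ l r, p.verts = l ++ q.verts ++ r

/-- `q` is a prefix subpath of `p`. -/
def IsPrefix (q p : DiPath edge) : Prop := q.verts <+: p.verts

/-- `q` is a suffix subpath of `p`. -/
def IsSuffix (q p : DiPath edge) : Prop := q.verts <:+ p.verts

end DiPath

/-- A directed graph is acyclic if its transitive closure is irreflexive. -/
def Acyclic (edge : V → V → Prop) : Prop := Irreflexive (Relation.TransGen edge)

theorem Acyclic.wf [Finite V] {edge : V → V → Prop} (h : Acyclic edge) :
    WellFounded (Relation.TransGen edge) := by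
  have h1 : IsIrrefl V (Relation.TransGen edge) := ⟨h⟩
  have h2 : IsTrans V (Relation.TransGen edge) := ⟨fun _ _ _ => Relation.TransGen.trans⟩
  exact Finite.wellFounded_of_trans_of_irrefl _

/-- A set of directed paths is proper if no path in it is a prefix subpath of another. -/
def Proper {edge : V → V → Prop} (A : Set (DiPath edge)) : Prop :=
  ∀ p ∈ A, ∀ q ∈ A, p.IsPrefix q → p = q

/-- `rel edge Y A`: the directed paths relevant for `Y` given `A`: paths with sink in `Y`
such that no member of `A` is a subpath, except possibly a prefix subpath. -/
def rel (edge : V → V → Prop) (Y : Set V) (A : Set (DiPath edge)) : Set (DiPath edge) :=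
  {α | α.sink ∈ Y ∧ ∀ β ∈ A, β.Subpath α → β.IsPrefix α}

/-- A path `α` is live for `Y` given `A` if some relevant path has it as a prefix. -/
def Live (edge : V → V → Prop) (Y : Set V) (A : Set (DiPath edge)) (α : DiPath edge) : Prop :=
  ∃ p ∈ rel edge Y A, α.IsPrefix p

/-- The set of members of `A` live for `Y` given `A`. -/
def liveSub (edge : V → V → Prop) (Y : Set V) (A : Set (DiPath edge)) : Set (DiPath edge) :=
  {α ∈ A | Live edge Y A α}

/-- `A` is live for `Y` if every member of `A` is live for `Y` given `A`. -/
def LiveSet (edge : V → V → Prop) (Y : Set V) (A : Set (DiPath edge)) : Prop :=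
  ∀ α ∈ A, Live edge Y A α

/-- The funnel operator for the edge `(w,y)`: paths of the form `(a,…,w,y)` are truncated
to `(a,…,w)`, paths containing `w` not ending with the edge `(w,y)` are removed, and other
paths are kept unchanged. -/
def funnel {edge : V → V → Prop} (w y : V) (A : Set (DiPath edge)) : Set (DiPath edge) :=
  {q | (q ∈ A ∧ w ∉ q.verts) ∨ (q.sink = w ∧ ∃ p ∈ A, p.verts = q.verts ++ [y])}

/-- `alphaSet edge A Y`: all directed paths (with at least one edge) with source in `A`,
sink in `A ∪ Y`, and not intersecting `A ∪ Y` except at the source and sink. -/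
def alphaSet (edge : V → V → Prop) (A Y : Set V) : Set (DiPath edge) :=
  {p | 2 ≤ p.verts.length ∧ p.src ∈ A ∧ p.sink ∈ A ∪ Y ∧
       ∀ l₁ v l₂, p.verts = l₁ ++ v :: l₂ → v ∈ A ∪ Y → l₁ = [] ∨ l₂ = []}

/-- The set of first edges of the (nontrivial) paths in `A`. -/
def firstEdges {edge : V → V → Prop} (A : Set (DiPath edge)) : Set (V × V) :=
  {e | ∃ p ∈ A, 2 ≤ p.verts.length ∧ e = p.firstEdge}

/-- A causal structure for the graph `(V, edge)` with state spaces `X`: a probability space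
together with, for each vertex `v` and assignment of values to its parents, a random
variable (the one-step-ahead potential outcome).  The function `f v` takes a full tuple of
values but depends only on the coordinates of parents of `v`. -/
structure CausalStructure (V : Type) (edge : V → V → Prop) (X : V → Type) : Type 1 where
  Ω : Type
  m : MeasurableSpace Ω
  μ : @MeasureTheory.Measure Ω m
  prob : μ Set.univ = 1
  f : (v : V) → ((w : V) → X w) → Ω → X v
  localDep : ∀ v x y, (∀ w, edge w v → x w = y w) → f v x = f v y

variable {X : V → Type}

/-- The natural (observed) variable of each vertex, obtained by recursive substitution with
no intervention. -/
noncomputable def observed [Finite V] {edge : V → V → Prop} [∀ v, Nonempty (X v)]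
    (hG : Acyclic edge) (C : CausalStructure V edge X) (v : V) : C.Ω → X v :=
  hG.wf.fix (C := fun u => C.Ω → X u)
    (fun v IH ω => C.f v (fun w =>
      if h : Relation.TransGen edge w v then IH w h ω else Classical.arbitrary (X w)) ω) v

/-- The response to the node intervention setting the vertices of `A` to the values `a`,
defined by recursive substitution. -/
noncomputable def nodeResp [Finite V] {edge : V → V → Prop} [∀ v, Nonempty (X v)]
    (hG : Acyclic edge) (C : CausalStructure V edge X)
    (A : Set V) (a : ∀ u, X u) (v : V) : C.Ω → X v :=
  hG.wf.fix (C := fun u => C.Ω → X u)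
    (fun v IH ω => C.f v (fun w =>
      if w ∈ A then a w
      else if h : Relation.TransGen edge w v then IH w h ω
      else Classical.arbitrary (X w)) ω) v

/-- The response to the edge intervention assigning, to each edge `e ∈ E`, the value
`aE e e.1` (a value in the state space of the source of `e`), defined by recursive
substitution. -/
noncomputable def edgeResp [Finite V] {edge : V → V → Prop} [∀ v, Nonempty (X v)]
    (hG : Acyclic edge) (C : CausalStructure V edge X)
    (E : Set (V × V)) (aE : V × V → ∀ u, X u) (v : V) : C.Ω → X v :=
  hG.wf.fix (C := fun u => C.Ω → X u)
    (fun v IH ω => C.f v (fun w =>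
      if (w, v) ∈ E then aE (w, v) w
      else if h : Relation.TransGen edge w v then IH w h ω
      else Classical.arbitrary (X w)) ω) v

/-- The funneled path assignment: the truncation of a path of `A` by the funnel operator for
`(w,y)` receives the value assigned to the original path; other paths keep their values. -/
noncomputable def funnelAssign {edge : V → V → Prop} (w y : V) (A : Set (DiPath edge))
    (a : DiPath edge → ∀ u, X u) (q : DiPath edge) : ∀ u, X u :=
  if h : q.sink = w ∧ ∃ p ∈ A, p.verts = q.verts ++ [y] then a h.2.choose else a q

/-- The response to the path intervention assigning, to each directed path `p ∈ A`, the
value `a p p.src` (a value in the state space of the source of `p`), defined by recursive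
substitution via the funnel operator. -/
noncomputable def pathResp [Finite V] {edge : V → V → Prop} [∀ v, Nonempty (X v)]
    (hG : Acyclic edge) (C : CausalStructure V edge X)
    (A : Set (DiPath edge)) (a : DiPath edge → ∀ u, X u) (v : V) : C.Ω → X v :=
  hG.wf.fix (C := fun u => Set (DiPath edge) → (DiPath edge → ∀ z, X z) → C.Ω → X u)
    (fun v IH A a ω => C.f v (fun w =>
      if h : ∃ p ∈ A, p.verts = [w, v] then a h.choose w
      else if hw : Relation.TransGen edge w v then
        IH w hw (funnel w v A) (funnelAssign w v A a) ω
      else Classical.arbitrary (X w)) ω) v A a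

/-- The response to the path intervention in which the paths of `Astar ⊆ A` are assigned
the constant values `a`, and the paths of `A ∖ Astar` are assigned the natural values of
their sources, defined by recursive substitution via the funnel operator. -/
noncomputable def pathRespNat [Finite V] {edge : V → V → Prop} [∀ v, Nonempty (X v)]
    (hG : Acyclic edge) (C : CausalStructure V edge X)
    (A Astar : Set (DiPath edge)) (a : DiPath edge → ∀ u, X u) (v : V) : C.Ω → X v :=
  hG.wf.fix (C := fun u =>
      Set (DiPath edge) → Set (DiPath edge) → (DiPath edge → ∀ z, X z) → C.Ω → X u)
    (fun v IH A Astar a ω => C.f v (fun w =>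
      if h : ∃ p ∈ A, p.verts = [w, v] then
        (if h.choose ∈ Astar then a h.choose w else observed hG C w ω)
      else if hw : Relation.TransGen edge w v then
        IH w hw (funnel w v A) (funnel w v Astar) (funnelAssign w v A a) ω
      else Classical.arbitrary (X w)) ω) v A Astar a

/-- The observed distribution `p(𝐕)`, as a probability mass function. -/
noncomputable def obsDist [Finite V] {edge : V → V → Prop} [∀ v, Nonempty (X v)]
    (hG : Acyclic edge) (C : CausalStructure V edge X) : (∀ v, X v) → ENNReal :=
  fun s => C.μ {ω | ∀ v, observed hG C v ω = s v}

/-- The single world model (Robins' FFRCISTG model): for every joint value assignment `x`,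
the one-step-ahead variables `{V(x_{pa(V)}) : V ∈ 𝐕}` are mutually independent. -/
def SWM {edge : V → V → Prop} (C : CausalStructure V edge X) : Prop :=
  ∀ x : ∀ u, X u, ∀ (S : Finset V) (s : ∀ u, X u),
    C.μ {ω | ∀ v ∈ S, C.f v x ω = s v} = ∏ v ∈ S, C.μ {ω | C.f v x ω = s v}

/-- The multiple worlds model (Pearl's NPSEM-IE): the families
`{V(x) : x an assignment to pa(V)}`, one family per vertex, are mutually independent. -/
def MWM {edge : V → V → Prop} (C : CausalStructure V edge X) : Prop :=
  ∀ (S : Finset V) (g : ∀ v, ((∀ u, X u) → X v)),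
    C.μ {ω | ∀ v ∈ S, (fun x => C.f v x ω) = g v} =
      ∏ v ∈ S, C.μ {ω | (fun x => C.f v x ω) = g v}

/-- The conditional probability `p(val | values c of the parents of v)` of the observed
distribution. -/
noncomputable def condProb [Finite V] {edge : V → V → Prop} [∀ v, Nonempty (X v)]
    (hG : Acyclic edge) (C : CausalStructure V edge X)
    (v : V) (val : X v) (c : ∀ u, X u) : ENNReal :=
  C.μ {ω | observed hG C v ω = val ∧ ∀ w, edge w v → observed hG C w ω = c w} /
    C.μ {ω | ∀ w, edge w v → observed hG C w ω = c w}

/-- A response distribution `R` is identified from `p(𝐕)` under the model `M` if any two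
causal structures in `M` with the same observed distribution give it the same value. -/
def Identified [Finite V] {edge : V → V → Prop} [∀ v, Nonempty (X v)] (hG : Acyclic edge)
    (M : CausalStructure V edge X → Prop)
    (R : CausalStructure V edge X → (∀ v, X v) → ENNReal) : Prop :=
  ∀ C₁ C₂, M C₁ → M C₂ → obsDist hG C₁ = obsDist hG C₂ → R C₁ = R C₂

/-- Paths relevant for `Y` given a set of edges `E`: sink in `Y` and no edge of `E` occurs
in the path except possibly as the first edge. -/
def relE (edge : V → V → Prop) (Y : Set V) (E : Set (V × V)) : Set (DiPath edge) :=
  {p | p.sink ∈ Y ∧ ∀ l₁ w v l₂, p.verts = l₁ ++ w :: v :: l₂ → (w, v) ∈ E → l₁ = []}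

/-- A set of edges is live for `Y` if each of its edges begins some relevant path. -/
def LiveE (edge : V → V → Prop) (Y : Set V) (E : Set (V × V)) : Prop :=
  ∀ e ∈ E, ∃ p ∈ relE edge Y E, ∃ l, p.verts = e.1 :: e.2 :: l

/-- A set of edges live for `Y` is consistent for `Y` if for every vertex `a`, the set of
first edges of relevant paths with source `a` is contained in `E` or disjoint from `E`. -/
def ConsistentE (edge : V → V → Prop) (Y : Set V) (E : Set (V × V)) : Prop :=
  ∀ a : V, (∀ p ∈ relE edge Y E, ∀ b l, p.verts = a :: b :: l → (a, b) ∈ E) ∨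
           (∀ p ∈ relE edge Y E, ∀ b l, p.verts = a :: b :: l → (a, b) ∉ E)

/-- An edge intervention is node consistent for `Y` if its edge set is live and consistent
for `Y` and all edges sharing a source are assigned the same value. -/
def NodeConsistent {X : V → Type} (edge : V → V → Prop) (Y : Set V) (E : Set (V × V))
    (aE : V × V → ∀ u, X u) : Prop :=
  LiveE edge Y E ∧ ConsistentE edge Y E ∧
    ∀ e ∈ E, ∀ e' ∈ E, e.1 = e'.1 → aE e e.1 = aE e' e.1

/-- A proper set of paths live for `Y` is consistent for `Y` if whenever the first edge of
some path of `A` occurs in a relevant path `β`, it is the first edge of a prefix subpath of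
`β` belonging to `A`. -/
def ConsistentP (edge : V → V → Prop) (Y : Set V) (A : Set (DiPath edge)) : Prop :=
  ∀ a b : V, (∃ p ∈ A, ∃ l, p.verts = a :: b :: l) →
    ∀ β ∈ rel edge Y A, (∃ l₁ l₂, β.verts = l₁ ++ a :: b :: l₂) →
      ∃ q ∈ A, q.IsPrefix β ∧ ∃ l', q.verts = a :: b :: l'

/-- A path intervention is edge consistent for `Y` if its path set is live and consistent
for `Y` and all paths sharing the same first edge are assigned the same value. -/
def EdgeConsistentP {X : V → Type} (edge : V → V → Prop) (Y : Set V)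
    (A : Set (DiPath edge)) (a : DiPath edge → ∀ u, X u) : Prop :=
  LiveSet edge Y A ∧ ConsistentP edge Y A ∧
    ∀ p ∈ A, ∀ q ∈ A, p.firstEdge = q.firstEdge → a p p.src = a q p.src

/-- A directed path of a graph is a directed path of any supergraph. -/
def liftPath {edge edge' : V → V → Prop} (h : ∀ a b, edge a b → edge' a b)
    (p : DiPath edge) : DiPath edge' :=
  ⟨p.verts, p.ne, p.chain.imp (fun {a b} hab => h a b hab)⟩


/-- A linear structural equation model for `G`: each structural function is linear in the
parent values (coefficients vanishing off the parent set) plus an error term, where the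
errors are mutually independent Gaussian random variables with strictly positive
variances. -/
def IsLinearSEM {V : Type} [Fintype V] {edge : V → V → Prop}
    (C : CausalStructure V edge (fun _ : V => ℝ)) : Prop :=
  ∃ (c : V → ℝ) (b : V → V → ℝ) (σ : V → NNReal) (ε : V → C.Ω → ℝ),
    (∀ v, σ v ≠ 0) ∧
    (∀ v w, ¬ edge w v → b v w = 0) ∧
    (∀ v x ω, C.f v x ω = c v + (∑ w, b v w * x w) + ε v ω) ∧
    (∀ v, @Measurable C.Ω ℝ C.m _ (ε v)) ∧
    (∀ (S : Finset V) (B : V → Set ℝ), (∀ v, MeasurableSet (B v)) →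
      C.μ {ω | ∀ v ∈ S, ε v ω ∈ B v} = ∏ v ∈ S, C.μ {ω | ε v ω ∈ B v}) ∧
    (∀ v (B : Set ℝ), MeasurableSet B →
      C.μ {ω | ε v ω ∈ B} = ProbabilityTheory.gaussianReal 0 (σ v) B)

section AuxMoments
open ProbabilityTheory Real

lemma sq_le_exp_aux {a x : ℝ} (ha : 0 < a) : x^2 * rexp (-a * x^2) ≤ (2/a) * rexp (-(a/2) * x^2) := by
  have h1 : (a/2) * x^2 + 1 ≤ rexp ((a/2) * x^2) := Real.add_one_le_exp _
  have h2 : x^2 ≤ (2/a) * rexp ((a/2) * x^2) := by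
    rw [div_mul_eq_mul_div, le_div_iff₀ ha]
    nlinarith
  calc x^2 * rexp (-a * x^2) ≤ ((2/a) * rexp ((a/2) * x^2)) * rexp (-a * x^2) :=
        mul_le_mul_of_nonneg_right h2 (Real.exp_pos _).le
    _ = (2/a) * rexp (-(a/2) * x^2) := by
        rw [mul_assoc, ← Real.exp_add]; ring_nf

variable {v : NNReal}

variable {v : NNReal}

lemma gaussianPDFReal_zero_eq (x : ℝ) :
    gaussianPDFReal 0 v x = (√(2 * π * v))⁻¹ * rexp (-(2 * (v:ℝ))⁻¹ * x^2) := by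
  unfold gaussianPDFReal
  congr 2
  ring

lemma integrable_sq_mul_pdf (hv : v ≠ 0) :
    Integrable (fun x : ℝ => x^2 * gaussianPDFReal 0 v x) := by
  have hvpos : (0:ℝ) < v := by positivity
  set a : ℝ := (2 * (v:ℝ))⁻¹ with ha
  have hapos : 0 < a := by positivity
  set k : ℝ := (√(2 * π * v))⁻¹ with hk
  have hknn : 0 ≤ k := by positivity
  have hg : Integrable (fun x : ℝ => (k * (2/a)) * rexp (-(a/2) * x^2)) :=
    (integrable_exp_neg_mul_sq (by positivity)).const_mul _
  refine hg.mono' ?_ ?_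
  · exact ((measurable_id.pow_const 2).mul (measurable_gaussianPDFReal 0 v)).aestronglyMeasurable
  · refine Filter.Eventually.of_forall fun x => ?_
    rw [Real.norm_eq_abs, abs_of_nonneg (mul_nonneg (sq_nonneg x) (gaussianPDFReal_nonneg 0 v x))]
    rw [gaussianPDFReal_zero_eq]
    calc x^2 * (k * rexp (-a * x^2)) = k * (x^2 * rexp (-a * x^2)) := by ring
      _ ≤ k * ((2/a) * rexp (-(a/2) * x^2)) := by
          exact mul_le_mul_of_nonneg_left (sq_le_exp_aux hapos) hknn
      _ = (k * (2/a)) * rexp (-(a/2) * x^2) := by ring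

lemma integrable_id_mul_pdf (hv : v ≠ 0) :
    Integrable (fun x : ℝ => x * gaussianPDFReal 0 v x) := by
  have h2 := integrable_sq_mul_pdf hv
  have h0 := integrable_gaussianPDFReal 0 v
  refine (h0.add h2).mono' ?_ ?_
  · exact (measurable_id.mul (measurable_gaussianPDFReal 0 v)).aestronglyMeasurable
  · refine Filter.Eventually.of_forall fun x => ?_
    have hpdf := gaussianPDFReal_nonneg 0 v x
    rw [Real.norm_eq_abs, abs_mul]
    have hx : |x| ≤ 1 + x^2 := by nlinarith [abs_nonneg x, sq_abs x, sq_nonneg (|x| - 1)]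
    calc |x| * |gaussianPDFReal 0 v x| = |x| * gaussianPDFReal 0 v x := by rw [abs_of_nonneg hpdf]
      _ ≤ (1 + x^2) * gaussianPDFReal 0 v x := mul_le_mul_of_nonneg_right hx hpdf
      _ = gaussianPDFReal 0 v x + x^2 * gaussianPDFReal 0 v x := by ring

lemma integrable_withDensity_pdf {f : ℝ → ℝ} (hf : Measurable f)
    (hfi : Integrable (fun x => f x * gaussianPDFReal 0 v x)) (hv : v ≠ 0) :
    Integrable f (gaussianReal 0 v) := by
  rw [gaussianReal_of_var_ne_zero _ hv]
  rw [integrable_withDensity_iff (measurable_gaussianPDF 0 v)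
    (Filter.Eventually.of_forall fun x => ENNReal.ofReal_lt_top)]
  refine hfi.congr (Filter.Eventually.of_forall fun x => ?_)
  simp only [gaussianPDF_def, ENNReal.toReal_ofReal (gaussianPDFReal_nonneg 0 v x)]

lemma gauss_integrable_id (hv : v ≠ 0) : Integrable (fun x : ℝ => x) (gaussianReal 0 v) :=
  integrable_withDensity_pdf measurable_id (integrable_id_mul_pdf hv) hv

lemma gauss_integrable_sq (hv : v ≠ 0) : Integrable (fun x : ℝ => x * x) (gaussianReal 0 v) := by
  have := integrable_withDensity_pdf (measurable_id.pow_const 2) (integrable_sq_mul_pdf hv) hv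
  exact this.congr (Filter.Eventually.of_forall fun x => by simp [sq])

lemma gauss_integral_id (hv : v ≠ 0) : ∫ x, x ∂(gaussianReal 0 v) = 0 := by
  have hmap : (gaussianReal 0 v).map (fun x => -1 * x) = gaussianReal 0 v := by
    rw [gaussianReal_map_const_mul (-1)]
    have h : (⟨(-1:ℝ)^2, sq_nonneg _⟩ : NNReal) = 1 := by ext; norm_num
    congr 1
    · norm_num
    · ext; simp
  have h1 : ∫ x, x ∂(gaussianReal 0 v) = ∫ x, x ∂((gaussianReal 0 v).map (fun x => -1 * x)) := by
    rw [hmap]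
  have h2 : ∫ x, x ∂((gaussianReal 0 v).map (fun x => -1 * x))
      = ∫ x, (fun y : ℝ => y) (-1 * x) ∂(gaussianReal 0 v) :=
    integral_map (f := fun y : ℝ => y) (measurable_const_mul (-1)).aemeasurable
      measurable_id.aestronglyMeasurable
  simp only [neg_one_mul] at h1 h2
  rw [h2] at h1
  rw [integral_neg] at h1
  linarith

lemma gauss_integral_sq_pos (hv : v ≠ 0) : 0 < ∫ x, x * x ∂(gaussianReal 0 v) := by
  rcases lt_or_eq_of_le (integral_nonneg (f := fun x : ℝ => x * x) (fun x => mul_self_nonneg x)) with h | h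
  · exact h
  exfalso
  have hzero : (fun x : ℝ => x * x) =ᵐ[gaussianReal 0 v] 0 :=
    (integral_eq_zero_iff_of_nonneg (fun x => mul_self_nonneg x) (gauss_integrable_sq hv)).mp h.symm
  have hset : (gaussianReal 0 v) {x : ℝ | ¬ x * x = 0} = 0 := hzero
  have hss : ({(0:ℝ)}ᶜ : Set ℝ) ⊆ {x : ℝ | ¬ x * x = 0} := by
    intro x hx
    simp only [Set.mem_compl_iff, Set.mem_singleton_iff] at hx
    simp [mul_self_eq_zero, hx]
  have h0 : (gaussianReal 0 v) ({(0:ℝ)}ᶜ) = 0 := measure_mono_null hss hset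
  have hvol : (volume : Measure ℝ) ({(0:ℝ)}ᶜ) = 0 :=
    gaussianReal_absolutelyContinuous' 0 hv h0
  have : (volume : Measure ℝ) Set.univ ≤ volume ({(0:ℝ)}ᶜ) + volume {(0:ℝ)} := by
    rw [← Set.compl_union_self {(0:ℝ)}]
    exact measure_union_le _ _
  simp [hvol] at this

section Moments

variable {Ω : Type} [MeasurableSpace Ω] {μ : Measure Ω} [IsProbabilityMeasure μ]
  {V : Type} [Fintype V] {ε : V → Ω → ℝ} {σ : V → NNReal}

lemma eps_integrable (hmeas : ∀ v, Measurable (ε v)) (hσ : ∀ v, σ v ≠ 0)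
    (hlaw : ∀ v, Measure.map (ε v) μ = gaussianReal 0 (σ v)) (v : V) :
    Integrable (ε v) μ := by
  have h := gauss_integrable_id (hσ v)
  rw [← hlaw v] at h
  exact (integrable_map_measure measurable_id.aestronglyMeasurable
    (hmeas v).aemeasurable).mp h

lemma eps_integral (hmeas : ∀ v, Measurable (ε v)) (hσ : ∀ v, σ v ≠ 0)
    (hlaw : ∀ v, Measure.map (ε v) μ = gaussianReal 0 (σ v)) (v : V) :
    ∫ ω, ε v ω ∂μ = 0 := by
  have h : ∫ x, (fun y : ℝ => y) x ∂(Measure.map (ε v) μ) = ∫ ω, (fun y : ℝ => y) (ε v ω) ∂μ :=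
    integral_map (hmeas v).aemeasurable measurable_id.aestronglyMeasurable
  rw [hlaw v] at h
  rw [← h]
  exact gauss_integral_id (hσ v)

lemma eps_sq_integrable (hmeas : ∀ v, Measurable (ε v)) (hσ : ∀ v, σ v ≠ 0)
    (hlaw : ∀ v, Measure.map (ε v) μ = gaussianReal 0 (σ v)) (v : V) :
    Integrable (fun ω => ε v ω * ε v ω) μ := by
  have h := gauss_integrable_sq (hσ v)
  rw [← hlaw v] at h
  exact (integrable_map_measure (measurable_id.mul measurable_id).aestronglyMeasurable
    (hmeas v).aemeasurable).mp h

lemma eps_sq_integral_pos (hmeas : ∀ v, Measurable (ε v)) (hσ : ∀ v, σ v ≠ 0)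
    (hlaw : ∀ v, Measure.map (ε v) μ = gaussianReal 0 (σ v)) (v : V) :
    0 < ∫ ω, ε v ω * ε v ω ∂μ := by
  have h : ∫ x, (fun y : ℝ => y * y) x ∂(Measure.map (ε v) μ)
      = ∫ ω, (fun y : ℝ => y * y) (ε v ω) ∂μ :=
    integral_map (hmeas v).aemeasurable (measurable_id.mul measurable_id).aestronglyMeasurable
  rw [hlaw v] at h
  calc (0:ℝ) < ∫ x, x * x ∂(gaussianReal 0 (σ v)) := gauss_integral_sq_pos (hσ v)
    _ = _ := h

lemma eps_mul_integrable (hmeas : ∀ v, Measurable (ε v)) (hσ : ∀ v, σ v ≠ 0)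
    (hlaw : ∀ v, Measure.map (ε v) μ = gaussianReal 0 (σ v))
    (hindep : ∀ s t, s ≠ t → ProbabilityTheory.IndepFun (ε s) (ε t) μ) (s t : V) :
    Integrable (fun ω => ε s ω * ε t ω) μ := by
  by_cases hst : s = t
  · subst hst; exact eps_sq_integrable hmeas hσ hlaw s
  · exact (hindep s t hst).integrable_mul (eps_integrable hmeas hσ hlaw s)
      (eps_integrable hmeas hσ hlaw t)

lemma eps_mul_integral (hmeas : ∀ v, Measurable (ε v)) (hσ : ∀ v, σ v ≠ 0)
    (hlaw : ∀ v, Measure.map (ε v) μ = gaussianReal 0 (σ v))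
    (hindep : ∀ s t, s ≠ t → ProbabilityTheory.IndepFun (ε s) (ε t) μ) {s t : V}
    (hst : s ≠ t) : ∫ ω, ε s ω * ε t ω ∂μ = 0 := by
  have h : ∫ ω, (ε s * ε t) ω ∂μ = (∫ ω, ε s ω ∂μ) * ∫ ω, ε t ω ∂μ :=
    (hindep s t hst).integral_mul_eq_mul_integral (hmeas s).aestronglyMeasurable (hmeas t).aestronglyMeasurable
  simp only [Pi.mul_apply] at h
  rw [h, eps_integral hmeas hσ hlaw s, zero_mul]

variable (ε) in
/-- linear combination of the errors -/
def lc (k : ℝ) (a : V → ℝ) : Ω → ℝ := fun ω => k + ∑ t, a t * ε t ω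

lemma lc_apply (k : ℝ) (a : V → ℝ) (ω : Ω) : lc ε k a ω = k + ∑ t, a t * ε t ω := rfl

lemma lc_measurable (hmeas : ∀ v, Measurable (ε v)) (k : ℝ) (a : V → ℝ) :
    Measurable (lc ε k a) := by
  apply Measurable.add measurable_const
  exact Finset.measurable_sum _ fun t _ => (hmeas t).const_mul _

lemma lc_integrable (hmeas : ∀ v, Measurable (ε v)) (hσ : ∀ v, σ v ≠ 0)
    (hlaw : ∀ v, Measure.map (ε v) μ = gaussianReal 0 (σ v)) (k : ℝ) (a : V → ℝ) :
    Integrable (lc ε k a) μ := by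
  apply Integrable.add (integrable_const k)
  exact integrable_finset_sum _ fun t _ => (eps_integrable hmeas hσ hlaw t).const_mul _

lemma lc_integral (hmeas : ∀ v, Measurable (ε v)) (hσ : ∀ v, σ v ≠ 0)
    (hlaw : ∀ v, Measure.map (ε v) μ = gaussianReal 0 (σ v)) (k : ℝ) (a : V → ℝ) :
    ∫ ω, lc ε k a ω ∂μ = k := by
  unfold lc
  rw [integral_add (integrable_const k)
    (integrable_finset_sum _ fun t _ => (eps_integrable hmeas hσ hlaw t).const_mul _),
    integral_finset_sum _ fun t _ => (eps_integrable hmeas hσ hlaw t).const_mul _]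
  simp only [integral_const_mul]
  simp [eps_integral hmeas hσ hlaw]

lemma lc_mul_expand (k1 k2 : ℝ) (a1 a2 : V → ℝ) (ω : Ω) :
    lc ε k1 a1 ω * lc ε k2 a2 ω
      = k1 * k2 + ((∑ t, (k1 * a2 t) * ε t ω) + ((∑ t, (k2 * a1 t) * ε t ω)
        + ∑ s, ∑ t, (a1 s * a2 t) * (ε s ω * ε t ω))) := by
  unfold lc
  have hsum : (∑ s, a1 s * ε s ω) * (∑ t, a2 t * ε t ω)
      = ∑ s, ∑ t, (a1 s * a2 t) * (ε s ω * ε t ω) := by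
    rw [Finset.sum_mul_sum]
    exact Finset.sum_congr rfl fun s _ => Finset.sum_congr rfl fun t _ => by ring
  have h1 : ∑ t, (k1 * a2 t) * ε t ω = k1 * ∑ t, a2 t * ε t ω := by
    rw [Finset.mul_sum]
    exact Finset.sum_congr rfl fun t _ => by ring
  have h2 : ∑ t, (k2 * a1 t) * ε t ω = k2 * ∑ t, a1 t * ε t ω := by
    rw [Finset.mul_sum]
    exact Finset.sum_congr rfl fun t _ => by ring
  rw [h1, h2, ← hsum]
  ring

lemma lc_mul_integrable (hmeas : ∀ v, Measurable (ε v)) (hσ : ∀ v, σ v ≠ 0)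
    (hlaw : ∀ v, Measure.map (ε v) μ = gaussianReal 0 (σ v))
    (hindep : ∀ s t, s ≠ t → ProbabilityTheory.IndepFun (ε s) (ε t) μ)
    (k1 k2 : ℝ) (a1 a2 : V → ℝ) :
    Integrable (fun ω => lc ε k1 a1 ω * lc ε k2 a2 ω) μ := by
  have : (fun ω => lc ε k1 a1 ω * lc ε k2 a2 ω) = fun ω =>
      k1 * k2 + ((∑ t, (k1 * a2 t) * ε t ω) + ((∑ t, (k2 * a1 t) * ε t ω)
        + ∑ s, ∑ t, (a1 s * a2 t) * (ε s ω * ε t ω))) :=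
    funext fun ω => lc_mul_expand k1 k2 a1 a2 ω
  rw [this]
  refine (integrable_const _).add (Integrable.add ?_ (Integrable.add ?_ ?_))
  · exact integrable_finset_sum _ fun t _ => (eps_integrable hmeas hσ hlaw t).const_mul _
  · exact integrable_finset_sum _ fun t _ => (eps_integrable hmeas hσ hlaw t).const_mul _
  · exact integrable_finset_sum _ fun s _ => integrable_finset_sum _ fun t _ =>
      (eps_mul_integrable hmeas hσ hlaw hindep s t).const_mul _

lemma lc_mul_integral (hmeas : ∀ v, Measurable (ε v)) (hσ : ∀ v, σ v ≠ 0)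
    (hlaw : ∀ v, Measure.map (ε v) μ = gaussianReal 0 (σ v))
    (hindep : ∀ s t, s ≠ t → ProbabilityTheory.IndepFun (ε s) (ε t) μ)
    (k1 k2 : ℝ) (a1 a2 : V → ℝ) :
    ∫ ω, lc ε k1 a1 ω * lc ε k2 a2 ω ∂μ
      = k1 * k2 + ∑ t, a1 t * a2 t * ∫ ω, ε t ω * ε t ω ∂μ := by
  have hrw : (fun ω => lc ε k1 a1 ω * lc ε k2 a2 ω) = fun ω =>
      k1 * k2 + ((∑ t, (k1 * a2 t) * ε t ω) + ((∑ t, (k2 * a1 t) * ε t ω)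
        + ∑ s, ∑ t, (a1 s * a2 t) * (ε s ω * ε t ω))) :=
    funext fun ω => lc_mul_expand k1 k2 a1 a2 ω
  have I1 : Integrable (fun ω => ∑ t, (k1 * a2 t) * ε t ω) μ :=
    integrable_finset_sum _ fun t _ => (eps_integrable hmeas hσ hlaw t).const_mul _
  have I2 : Integrable (fun ω => ∑ t, (k2 * a1 t) * ε t ω) μ :=
    integrable_finset_sum _ fun t _ => (eps_integrable hmeas hσ hlaw t).const_mul _
  have I3 : Integrable (fun ω => ∑ s, ∑ t, (a1 s * a2 t) * (ε s ω * ε t ω)) μ :=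
    integrable_finset_sum _ fun s _ => integrable_finset_sum _ fun t _ =>
      (eps_mul_integrable hmeas hσ hlaw hindep s t).const_mul _
  have I23 : Integrable (fun ω => (∑ t, (k2 * a1 t) * ε t ω)
      + ∑ s, ∑ t, (a1 s * a2 t) * (ε s ω * ε t ω)) μ := I2.add I3
  have I123 : Integrable (fun ω => (∑ t, (k1 * a2 t) * ε t ω) + ((∑ t, (k2 * a1 t) * ε t ω)
      + ∑ s, ∑ t, (a1 s * a2 t) * (ε s ω * ε t ω))) μ := I1.add I23
  rw [hrw, integral_add (integrable_const _) I123, integral_add I1 I23, integral_add I2 I3]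
  rw [integral_finset_sum _ fun t _ => (eps_integrable hmeas hσ hlaw t).const_mul _,
    integral_finset_sum _ fun t _ => (eps_integrable hmeas hσ hlaw t).const_mul _,
    integral_finset_sum _ fun s _ => integrable_finset_sum _ fun t _ =>
      (eps_mul_integrable hmeas hσ hlaw hindep s t).const_mul _]
  simp only [integral_const_mul, integral_const, probReal_univ, measure_univ, ENNReal.toReal_one, one_smul,
    smul_eq_mul]
  simp only [eps_integral hmeas hσ hlaw, mul_zero, Finset.sum_const_zero, add_zero, zero_add]
  have hinner : ∀ s : V, ∫ ω, (∑ t, (a1 s * a2 t) * (ε s ω * ε t ω)) ∂μ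
      = ∑ t, (a1 s * a2 t) * ∫ ω, ε s ω * ε t ω ∂μ := by
    intro s
    rw [integral_finset_sum _ fun t _ =>
      (eps_mul_integrable hmeas hσ hlaw hindep s t).const_mul _]
    simp only [integral_const_mul]
  simp only [hinner]
  rw [one_mul]
  have hdiag : ∀ s : V, ∑ t, (a1 s * a2 t) * ∫ ω, ε s ω * ε t ω ∂μ
      = a1 s * a2 s * ∫ ω, ε s ω * ε s ω ∂μ := by
    intro s
    rw [Finset.sum_eq_single s]
    · intro t _ hts
      rw [eps_mul_integral hmeas hσ hlaw hindep (Ne.symm hts), mul_zero]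
    · intro hs; exact absurd (Finset.mem_univ s) hs
  simp only [hdiag]

lemma eps_eq_lc (s : V) (ω : Ω) :
    ε s ω = lc ε 0 (fun t => if t = s then 1 else 0) ω := by
  simp [lc_apply, Finset.sum_ite_eq']

lemma lc_mul_eps_integral (hmeas : ∀ v, Measurable (ε v)) (hσ : ∀ v, σ v ≠ 0)
    (hlaw : ∀ v, Measure.map (ε v) μ = gaussianReal 0 (σ v))
    (hindep : ∀ s t, s ≠ t → ProbabilityTheory.IndepFun (ε s) (ε t) μ)
    (k : ℝ) (a : V → ℝ) (s : V) :
    ∫ ω, lc ε k a ω * ε s ω ∂μ = a s * ∫ ω, ε s ω * ε s ω ∂μ := by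
  have h : (fun ω => lc ε k a ω * ε s ω)
      = fun ω => lc ε k a ω * lc ε 0 (fun t => if t = s then 1 else 0) ω :=
    funext fun ω => by rw [← eps_eq_lc]
  rw [h, lc_mul_integral hmeas hσ hlaw hindep]
  simp [mul_ite, ite_mul, Finset.sum_ite_eq']


lemma lc_unique (hmeas : ∀ v, Measurable (ε v)) (hσ : ∀ v, σ v ≠ 0)
    (hlaw : ∀ v, Measure.map (ε v) μ = gaussianReal 0 (σ v))
    (hindep : ∀ s t, s ≠ t → ProbabilityTheory.IndepFun (ε s) (ε t) μ)
    {k k' : ℝ} {a a' : V → ℝ} (h : lc ε k a = lc ε k' a') :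
    k = k' ∧ ∀ t, a t = a' t := by
  constructor
  · have h1 := lc_integral hmeas hσ hlaw (μ := μ) k a
    rw [h, lc_integral hmeas hσ hlaw] at h1
    exact h1.symm
  · intro t
    have h1 : ∫ ω, lc ε k a ω * ε t ω ∂μ = ∫ ω, lc ε k' a' ω * ε t ω ∂μ := by rw [h]
    rw [lc_mul_eps_integral hmeas hσ hlaw hindep, lc_mul_eps_integral hmeas hσ hlaw hindep] at h1
    exact mul_right_cancel₀ (ne_of_gt (eps_sq_integral_pos hmeas hσ hlaw t)) h1

lemma indep_of_rect (hmeas : ∀ v, Measurable (ε v))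
    (hrect : ∀ (S : Finset V) (Bs : V → Set ℝ), (∀ v, MeasurableSet (Bs v)) →
      μ {ω | ∀ v ∈ S, ε v ω ∈ Bs v} = ∏ v ∈ S, μ {ω | ε v ω ∈ Bs v})
    {s t : V} (hst : s ≠ t) : ProbabilityTheory.IndepFun (ε s) (ε t) μ := by
  rw [ProbabilityTheory.indepFun_iff_measure_inter_preimage_eq_mul]
  intro s' t' hs' ht'
  set Bs : V → Set ℝ := fun v => if v = s then s' else if v = t then t' else Set.univ with hBs
  have hBm : ∀ v, MeasurableSet (Bs v) := by
    intro v
    simp only [hBs]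
    split_ifs <;> first | exact hs' | exact ht' | exact MeasurableSet.univ
  have h := hrect {s, t} Bs hBm
  have hset : {ω | ∀ v ∈ ({s, t} : Finset V), ε v ω ∈ Bs v} = ε s ⁻¹' s' ∩ ε t ⁻¹' t' := by
    ext ω
    simp only [Finset.mem_insert, Finset.mem_singleton, Set.mem_setOf_eq, Set.mem_inter_iff,
      Set.mem_preimage]
    constructor
    · intro hv
      refine ⟨?_, ?_⟩
      · have := hv s (Or.inl rfl)
        simpa [hBs] using this
      · have := hv t (Or.inr rfl)
        simpa [hBs, hst.symm] using this
    · rintro ⟨h1, h2⟩ v (rfl | rfl)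
      · simpa [hBs] using h1
      · simpa [hBs, hst.symm] using h2
  have hprod : ∏ v ∈ ({s, t} : Finset V), μ {ω | ε v ω ∈ Bs v}
      = μ (ε s ⁻¹' s') * μ (ε t ⁻¹' t') := by
    rw [Finset.prod_insert (by simpa using hst), Finset.prod_singleton]
    congr 1
    · apply congrArg
      ext ω
      simp [hBs]
    · apply congrArg
      ext ω
      simp [hBs, hst.symm]
  rw [hset, hprod] at h
  exact h



end Moments

end AuxMoments


section Algebra

variable {V : Type} [Fintype V]


lemma cov_rel' {b : V → ℝ} {M : V → V → ℝ} {Mw : V → ℝ} {Q : V → ℝ} {v : V}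
    (hM : ∀ t, M v t = (if t = v then 1 else 0) + ∑ u, b u * M u t) :
    ∑ t, M v t * Mw t * Q t
      = Mw v * Q v + ∑ u, b u * ∑ t, M u t * Mw t * Q t := by
  have h1 : ∀ t, M v t * Mw t * Q t
      = (if t = v then Mw t * Q t else 0) + ∑ u, b u * (M u t * Mw t * Q t) := by
    intro t
    rw [hM t, add_mul, add_mul, Finset.sum_mul, Finset.sum_mul]
    congr 1
    · split_ifs <;> ring
    · exact Finset.sum_congr rfl fun u _ => by ring
  simp only [h1]
  rw [Finset.sum_add_distrib]
  congr 1
  · simp [Finset.sum_ite_eq' Finset.univ v (fun t => Mw t * Q t)]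
  · rw [Finset.sum_comm]
    exact Finset.sum_congr rfl fun u _ => by rw [Finset.mul_sum]

lemma quad_form {d : V → ℝ} {M : V → V → ℝ} {Q : V → ℝ} :
    ∑ w, d w * ∑ u, d u * ∑ t, M u t * M w t * Q t
      = ∑ t, (∑ u, d u * M u t) * (∑ w, d w * M w t) * Q t := by
  have lhs : ∑ w, d w * ∑ u, d u * ∑ t, M u t * M w t * Q t
      = ∑ w, ∑ u, ∑ t, (d u * M u t) * (d w * M w t) * Q t := by
    refine Finset.sum_congr rfl fun w _ => ?_
    rw [Finset.mul_sum]
    refine Finset.sum_congr rfl fun u _ => ?_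
    rw [Finset.mul_sum, Finset.mul_sum]
    exact Finset.sum_congr rfl fun t _ => by ring
  have rhs : ∑ t, (∑ u, d u * M u t) * (∑ w, d w * M w t) * Q t
      = ∑ t, ∑ u, ∑ w, (d u * M u t) * (d w * M w t) * Q t := by
    refine Finset.sum_congr rfl fun t _ => ?_
    rw [Finset.sum_mul_sum, Finset.sum_mul]
    refine Finset.sum_congr rfl fun u _ => ?_
    rw [Finset.sum_mul]
  calc ∑ w, d w * ∑ u, d u * ∑ t, M u t * M w t * Q t
      = ∑ w, ∑ u, ∑ t, (d u * M u t) * (d w * M w t) * Q t := lhs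
    _ = ∑ u, ∑ w, ∑ t, (d u * M u t) * (d w * M w t) * Q t := Finset.sum_comm
    _ = ∑ u, ∑ t, ∑ w, (d u * M u t) * (d w * M w t) * Q t :=
        Finset.sum_congr rfl fun u _ => Finset.sum_comm
    _ = ∑ t, ∑ u, ∑ w, (d u * M u t) * (d w * M w t) * Q t := Finset.sum_comm
    _ = ∑ t, (∑ u, d u * M u t) * (∑ w, d w * M w t) * Q t := rhs.symm

lemma exists_maximal {edge : V → V → Prop} (hG : Acyclic edge) {S : Set V}
    (hS : S.Nonempty) : ∃ u ∈ S, ∀ w ∈ S, ¬ Relation.TransGen edge u w := by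
  have hacy : Acyclic (Function.swap edge) := by
    intro x hx
    exact hG x (Relation.transGen_swap.mp hx)
  obtain ⟨u, huS, hmin⟩ := hacy.wf.has_min S hS
  exact ⟨u, huS, fun w hw huw => hmin w hw (Relation.transGen_swap.mpr huw)⟩

end Algebra

section GraphAux

open ProbabilityTheory

variable {V : Type} [Fintype V] {edge : V → V → Prop} {X : V → Type} [∀ v, Nonempty (X v)]

lemma observed_fix (hG : Acyclic edge) (C : CausalStructure V edge X) (v : V) (ω : C.Ω) :
    observed hG C v ω = C.f v (fun w =>
      if h : Relation.TransGen edge w v then observed hG C w ω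
      else Classical.arbitrary (X w)) ω := by
  conv_lhs => rw [observed, WellFounded.fix_eq]
  rfl

lemma pathResp_fix (hG : Acyclic edge) (C : CausalStructure V edge X)
    (A : Set (DiPath edge)) (a : DiPath edge → ∀ u, X u) (v : V) (ω : C.Ω) :
    pathResp hG C A a v ω = C.f v (fun w =>
      if h : ∃ p ∈ A, p.verts = [w, v] then a h.choose w
      else if hw : Relation.TransGen edge w v then
        pathResp hG C (funnel w v A) (funnelAssign w v A a) w ω
      else Classical.arbitrary (X w)) ω := by
  conv_lhs => rw [pathResp, WellFounded.fix_eq]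
  rfl

/-- deterministic mirror of `pathResp` for a linear SEM -/
noncomputable def pathFun (hG : Acyclic edge) (c : V → ℝ) (b : V → V → ℝ)
    (A : Set (DiPath edge)) (a : DiPath edge → V → ℝ) (v : V) (e : V → ℝ) : ℝ :=
  hG.wf.fix (C := fun _ => Set (DiPath edge) → (DiPath edge → V → ℝ) → (V → ℝ) → ℝ)
    (fun v IH A a e =>
      c v + (∑ w, b v w * (if h : ∃ p ∈ A, p.verts = [w, v] then a h.choose w
        else if hw : Relation.TransGen edge w v then
          IH w hw (funnel w v A) (funnelAssign (X := fun _ : V => ℝ) w v A a) e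
        else Classical.arbitrary ℝ)) + e v) v A a e

lemma pathFun_fix (hG : Acyclic edge) (c : V → ℝ) (b : V → V → ℝ)
    (A : Set (DiPath edge)) (a : DiPath edge → V → ℝ) (v : V) (e : V → ℝ) :
    pathFun hG c b A a v e
      = c v + (∑ w, b v w * (if h : ∃ p ∈ A, p.verts = [w, v] then a h.choose w
        else if hw : Relation.TransGen edge w v then
          pathFun hG c b (funnel w v A) (funnelAssign (X := fun _ : V => ℝ) w v A a) w e
        else Classical.arbitrary ℝ)) + e v := by
  conv_lhs => rw [pathFun, WellFounded.fix_eq]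
  rfl

lemma pathResp_eq_pathFun (hG : Acyclic edge) (C : CausalStructure V edge (fun _ : V => ℝ))
    {c : V → ℝ} {b : V → V → ℝ} {ε : V → C.Ω → ℝ}
    (hf : ∀ v x ω, C.f v x ω = c v + (∑ w, b v w * x w) + ε v ω) :
    ∀ (v : V) (A : Set (DiPath edge)) (a : DiPath edge → V → ℝ) (ω : C.Ω),
      pathResp hG C A a v ω = pathFun hG c b A a v (fun t => ε t ω) := by
  intro v
  induction v using hG.wf.induction with
  | _ v IH =>
    intro A a ω
    rw [pathResp_fix, pathFun_fix, hf]
    congr 2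
    apply Finset.sum_congr rfl
    intro w _
    congr 1
    by_cases h : ∃ p ∈ A, p.verts = [w, v]
    · rw [dif_pos h, dif_pos h]
    · rw [dif_neg h, dif_neg h]
      by_cases hw : Relation.TransGen edge w v
      · rw [dif_pos hw, dif_pos hw, IH w hw]
      · rw [dif_neg hw, dif_neg hw]

lemma observed_linear (hG : Acyclic edge) (C : CausalStructure V edge (fun _ : V => ℝ))
    {c : V → ℝ} {b : V → V → ℝ} {ε : V → C.Ω → ℝ}
    (hb0 : ∀ v w, ¬ edge w v → b v w = 0)
    (hf : ∀ v x ω, C.f v x ω = c v + (∑ w, b v w * x w) + ε v ω) (v : V) (ω : C.Ω) :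
    observed hG C v ω = c v + (∑ w, b v w * observed hG C w ω) + ε v ω := by
  rw [observed_fix, hf]
  congr 2
  apply Finset.sum_congr rfl
  intro w _
  by_cases hw : Relation.TransGen edge w v
  · rw [dif_pos hw]
  · rw [dif_neg hw, hb0 v w (fun he => hw (Relation.TransGen.single he)), zero_mul, zero_mul]

lemma observed_rep_step (hG : Acyclic edge) (C : CausalStructure V edge (fun _ : V => ℝ))
    {c : V → ℝ} {b : V → V → ℝ} {ε : V → C.Ω → ℝ}
    (hb0 : ∀ v w, ¬ edge w v → b v w = 0)
    (hf : ∀ v x ω, C.f v x ω = c v + (∑ w, b v w * x w) + ε v ω) (v : V)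
    (K : V → ℝ) (M : V → V → ℝ)
    (hall : ∀ u, Relation.TransGen edge u v → ∀ ω, observed hG C u ω = lc ε (K u) (M u) ω)
    (ω : C.Ω) :
    observed hG C v ω = lc ε (c v + ∑ u, b v u * K u)
      (fun t => (if t = v then 1 else 0) + ∑ u, b v u * M u t) ω := by
  rw [observed_linear hG C hb0 hf v ω]
  have hmid : (∑ w, b v w * observed hG C w ω) = ∑ u, b v u * lc ε (K u) (M u) ω := by
    apply Finset.sum_congr rfl
    intro u _
    by_cases hu : Relation.TransGen edge u v
    · rw [hall u hu ω]
    · rw [hb0 v u (fun he => hu (Relation.TransGen.single he)), zero_mul, zero_mul]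
  rw [hmid]
  simp only [lc_apply]
  have e1 : ∑ u, b v u * (K u + ∑ t, M u t * ε t ω)
      = (∑ u, b v u * K u) + ∑ u, ∑ t, (b v u * M u t) * ε t ω := by
    rw [← Finset.sum_add_distrib]
    apply Finset.sum_congr rfl
    intro u _
    rw [mul_add, Finset.mul_sum]
    congr 1
    apply Finset.sum_congr rfl
    intro t _
    ring
  have e2 : ∑ t, ((if t = v then 1 else 0) + ∑ u, b v u * M u t) * ε t ω
      = ε v ω + ∑ t, ∑ u, (b v u * M u t) * ε t ω := by
    simp only [add_mul, ite_mul, one_mul, zero_mul, Finset.sum_mul]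
    rw [Finset.sum_add_distrib]
    congr 1
    simp [Finset.sum_ite_eq' Finset.univ v (fun t => ε t ω)]
  rw [e1, e2, Finset.sum_comm]
  ring

lemma observed_rep (hG : Acyclic edge) (C : CausalStructure V edge (fun _ : V => ℝ))
    {c : V → ℝ} {b : V → V → ℝ} {ε : V → C.Ω → ℝ}
    (hb0 : ∀ v w, ¬ edge w v → b v w = 0)
    (hf : ∀ v x ω, C.f v x ω = c v + (∑ w, b v w * x w) + ε v ω) :
    ∀ v : V, ∃ (k : ℝ) (m : V → ℝ), (∀ ω, observed hG C v ω = lc ε k m ω) ∧ m v = 1 ∧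
      ∀ t, t ≠ v → ¬ Relation.TransGen edge t v → m t = 0 := by
  intro v
  induction v using hG.wf.induction with
  | _ v IH =>
    choose K M hrep hdiag hvan using IH
    set Kd : V → ℝ := fun u => if h : Relation.TransGen edge u v then K u h else 0 with hKd
    set Md : V → V → ℝ := fun u =>
      if h : Relation.TransGen edge u v then M u h else fun _ => 0 with hMd
    refine ⟨c v + ∑ u, b v u * Kd u,
      fun t => (if t = v then 1 else 0) + ∑ u, b v u * Md u t, ?_, ?_, ?_⟩
    · intro ω
      refine observed_rep_step hG C hb0 hf v Kd Md ?_ ω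
      intro u hu ω'
      simp only [hKd, hMd, dif_pos hu]
      exact hrep u hu ω'
    · show (if v = v then 1 else 0) + ∑ u, b v u * Md u v = 1
      rw [if_pos rfl]
      have : ∀ u ∈ Finset.univ, b v u * Md u v = 0 := by
        intro u _
        by_cases hu : Relation.TransGen edge u v
        · have huv : u ≠ v := fun he => hG v (he ▸ hu)
          have hnv : ¬ Relation.TransGen edge v u := fun hvu => hG v (hvu.trans hu)
          simp only [hMd, dif_pos hu]
          rw [hvan u hu v (Ne.symm huv) hnv, mul_zero]
        · rw [hb0 v u (fun he => hu (Relation.TransGen.single he)), zero_mul]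
      rw [Finset.sum_eq_zero this, add_zero]
    · intro t ht htv
      show (if t = v then 1 else 0) + ∑ u, b v u * Md u t = 0
      rw [if_neg ht]
      have : ∀ u ∈ Finset.univ, b v u * Md u t = 0 := by
        intro u _
        by_cases hu : Relation.TransGen edge u v
        · have h1 : t ≠ u := fun he => htv (he ▸ hu)
          have h2 : ¬ Relation.TransGen edge t u := fun h => htv (h.trans hu)
          simp only [hMd, dif_pos hu]
          rw [hvan u hu t h1 h2, mul_zero]
        · rw [hb0 v u (fun he => hu (Relation.TransGen.single he)), zero_mul]
      rw [Finset.sum_eq_zero this, zero_add]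

lemma observed_measurable (hG : Acyclic edge) (C : CausalStructure V edge (fun _ : V => ℝ))
    {c : V → ℝ} {b : V → V → ℝ} {ε : V → C.Ω → ℝ}
    (hf : ∀ v x ω, C.f v x ω = c v + (∑ w, b v w * x w) + ε v ω)
    (hmeas : ∀ v, @Measurable C.Ω ℝ C.m _ (ε v)) :
    ∀ v, @Measurable C.Ω ℝ C.m _ (observed hG C v) := by
  letI := C.m
  intro v
  induction v using hG.wf.induction with
  | _ v IH =>
    have : observed hG C v = fun ω => c v + (∑ w, b v w *
        (if h : Relation.TransGen edge w v then observed hG C w ω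
          else Classical.arbitrary ℝ)) + ε v ω := by
      funext ω
      rw [observed_fix, hf]
    rw [this]
    apply Measurable.add
    apply Measurable.add measurable_const
    · apply Finset.measurable_sum
      intro w _
      by_cases hw : Relation.TransGen edge w v
      · simp only [dif_pos hw]
        exact (IH w hw).const_mul _
      · simp only [dif_neg hw]
        exact measurable_const
    · exact hmeas v

lemma pathFun_measurable (hG : Acyclic edge) (c : V → ℝ) (b : V → V → ℝ) :
    ∀ (v : V) (A : Set (DiPath edge)) (a : DiPath edge → V → ℝ),
      Measurable (fun e : V → ℝ => pathFun hG c b A a v e) := by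
  intro v
  induction v using hG.wf.induction with
  | _ v IH =>
    intro A a
    have : (fun e : V → ℝ => pathFun hG c b A a v e)
        = fun e : V → ℝ => c v + (∑ w, b v w *
          (if h : ∃ p ∈ A, p.verts = [w, v] then a h.choose w
            else if hw : Relation.TransGen edge w v then
              pathFun hG c b (funnel w v A) (funnelAssign (X := fun _ : V => ℝ) w v A a) w e
            else Classical.arbitrary ℝ)) + e v := by
      funext e
      rw [pathFun_fix]
    rw [this]
    apply Measurable.add
    apply Measurable.add measurable_const
    · apply Finset.measurable_sum
      intro w _
      by_cases h : ∃ p ∈ A, p.verts = [w, v]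
      · simp only [dif_pos h]
        exact measurable_const
      · simp only [dif_neg h]
        by_cases hw : Relation.TransGen edge w v
        · simp only [dif_pos hw]
          exact (IH w hw _ _).const_mul _
        · simp only [dif_neg hw]
          exact measurable_const
    · exact measurable_pi_apply v


end GraphAux


/-- in a linear SEM every response to a path intervention is identified: two
linear SEM structures for `G` with the same observed distribution induce the same joint
distribution of the responses `{Y(𝔞_𝛂) : Y ∈ 𝐘}` for any path intervention `π_{𝔞_𝛂}`. -/
theorem linear_sem_path_identified {V : Type} [Fintype V] {edge : V → V → Prop}
    (hG : Acyclic edge) (A : Set (DiPath edge)) (hA : Proper A)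
    (a : DiPath edge → V → ℝ) (Y : Set V) :
    ∀ C₁ C₂ : CausalStructure V edge (fun _ : V => ℝ),
      IsLinearSEM C₁ → IsLinearSEM C₂ →
      (∀ B : Set (V → ℝ), MeasurableSet B →
        C₁.μ {ω | (fun v => observed hG C₁ v ω) ∈ B} =
          C₂.μ {ω | (fun v => observed hG C₂ v ω) ∈ B}) →
      (∀ B : Set (↥Y → ℝ), MeasurableSet B →
        C₁.μ {ω | (fun y : ↥Y => pathResp hG C₁ A a (y : V) ω) ∈ B} =
          C₂.μ {ω | (fun y : ↥Y => pathResp hG C₂ A a (y : V) ω) ∈ B}) := by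
  intro C₁ C₂ h₁ h₂ hobs B hB
  obtain ⟨c₁, b₁, σ₁, ε₁, hσ₁, hb₁, hf₁, hm₁, hR₁, hL₁⟩ := h₁
  obtain ⟨c₂, b₂, σ₂, ε₂, hσ₂, hb₂, hf₂, hm₂, hR₂, hL₂⟩ := h₂
  letI := C₁.m
  letI := C₂.m
  haveI : IsProbabilityMeasure C₁.μ := ⟨C₁.prob⟩
  haveI : IsProbabilityMeasure C₂.μ := ⟨C₂.prob⟩
  have hlaw₁ : ∀ v, Measure.map (ε₁ v) C₁.μ = ProbabilityTheory.gaussianReal 0 (σ₁ v) := by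
    intro v
    refine Measure.ext fun s hs => ?_
    rw [Measure.map_apply (hm₁ v) hs]
    exact hL₁ v s hs
  have hlaw₂ : ∀ v, Measure.map (ε₂ v) C₂.μ = ProbabilityTheory.gaussianReal 0 (σ₂ v) := by
    intro v
    refine Measure.ext fun s hs => ?_
    rw [Measure.map_apply (hm₂ v) hs]
    exact hL₂ v s hs
  have hind₁ : ∀ s t, s ≠ t → ProbabilityTheory.IndepFun (ε₁ s) (ε₁ t) C₁.μ :=
    fun s t hst => indep_of_rect hm₁ hR₁ hst
  have hind₂ : ∀ s t, s ≠ t → ProbabilityTheory.IndepFun (ε₂ s) (ε₂ t) C₂.μ :=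
    fun s t hst => indep_of_rect hm₂ hR₂ hst
  obtain ⟨K₁, M₁, hrep₁, hdiag₁, hvan₁⟩ :
      ∃ (K : V → ℝ) (M : V → V → ℝ),
        (∀ v ω, observed hG C₁ v ω = lc ε₁ (K v) (M v) ω) ∧ (∀ v, M v v = 1) ∧
        (∀ v t, t ≠ v → ¬ Relation.TransGen edge t v → M v t = 0) := by
    choose K M h1 h2 h3 using observed_rep hG C₁ hb₁ hf₁
    exact ⟨K, M, h1, h2, h3⟩
  obtain ⟨K₂, M₂, hrep₂, hdiag₂, hvan₂⟩ :
      ∃ (K : V → ℝ) (M : V → V → ℝ),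
        (∀ v ω, observed hG C₂ v ω = lc ε₂ (K v) (M v) ω) ∧ (∀ v, M v v = 1) ∧
        (∀ v t, t ≠ v → ¬ Relation.TransGen edge t v → M v t = 0) := by
    choose K M h1 h2 h3 using observed_rep hG C₂ hb₂ hf₂
    exact ⟨K, M, h1, h2, h3⟩
  have hrec₁ : ∀ v, K₁ v = c₁ v + ∑ u, b₁ v u * K₁ u ∧
      ∀ t, M₁ v t = (if t = v then 1 else 0) + ∑ u, b₁ v u * M₁ u t := by
    intro v
    have hstep := observed_rep_step hG C₁ hb₁ hf₁ v K₁ M₁ (fun u _ ω => hrep₁ u ω)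
    exact lc_unique hm₁ hσ₁ hlaw₁ hind₁
      (funext fun ω => (hrep₁ v ω).symm.trans (hstep ω))
  have hrec₂ : ∀ v, K₂ v = c₂ v + ∑ u, b₂ v u * K₂ u ∧
      ∀ t, M₂ v t = (if t = v then 1 else 0) + ∑ u, b₂ v u * M₂ u t := by
    intro v
    have hstep := observed_rep_step hG C₂ hb₂ hf₂ v K₂ M₂ (fun u _ ω => hrep₂ u ω)
    exact lc_unique hm₂ hσ₂ hlaw₂ hind₂
      (funext fun ω => (hrep₂ v ω).symm.trans (hstep ω))
  set T₁ : C₁.Ω → (V → ℝ) := fun ω v => observed hG C₁ v ω with hT₁def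
  set T₂ : C₂.Ω → (V → ℝ) := fun ω v => observed hG C₂ v ω with hT₂def
  have hTm₁ : Measurable T₁ :=
    measurable_pi_lambda _ (fun v => observed_measurable hG C₁ hf₁ hm₁ v)
  have hTm₂ : Measurable T₂ :=
    measurable_pi_lambda _ (fun v => observed_measurable hG C₂ hf₂ hm₂ v)
  have hmapeq : Measure.map T₁ C₁.μ = Measure.map T₂ C₂.μ := by
    refine Measure.ext fun s hs => ?_
    rw [Measure.map_apply hTm₁ hs, Measure.map_apply hTm₂ hs]
    exact hobs s hs
  set Q₁ : V → ℝ := fun t => ∫ ω, ε₁ t ω * ε₁ t ω ∂C₁.μ with hQ₁def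
  set Q₂ : V → ℝ := fun t => ∫ ω, ε₂ t ω * ε₂ t ω ∂C₂.μ with hQ₂def
  have hKint₁ : ∀ v, ∫ ω, observed hG C₁ v ω ∂C₁.μ = K₁ v := by
    intro v
    rw [integral_congr_ae (Filter.Eventually.of_forall (hrep₁ v))]
    exact lc_integral hm₁ hσ₁ hlaw₁ _ _
  have hKint₂ : ∀ v, ∫ ω, observed hG C₂ v ω ∂C₂.μ = K₂ v := by
    intro v
    rw [integral_congr_ae (Filter.Eventually.of_forall (hrep₂ v))]
    exact lc_integral hm₂ hσ₂ hlaw₂ _ _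
  have hmom1 : ∀ v, ∫ ω, observed hG C₁ v ω ∂C₁.μ = ∫ ω, observed hG C₂ v ω ∂C₂.μ := by
    intro v
    have e₁ : ∫ x, x v ∂(Measure.map T₁ C₁.μ) = ∫ ω, observed hG C₁ v ω ∂C₁.μ :=
      integral_map hTm₁.aemeasurable (measurable_pi_apply v).aestronglyMeasurable
    have e₂ : ∫ x, x v ∂(Measure.map T₂ C₂.μ) = ∫ ω, observed hG C₂ v ω ∂C₂.μ :=
      integral_map hTm₂.aemeasurable (measurable_pi_apply v).aestronglyMeasurable
    rw [← e₁, ← e₂, hmapeq]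
  have hKeq : ∀ v, K₁ v = K₂ v := by
    intro v
    rw [← hKint₁ v, hmom1 v, hKint₂ v]
  have hK2₁ : ∀ v w, ∫ ω, observed hG C₁ v ω * observed hG C₁ w ω ∂C₁.μ
      = K₁ v * K₁ w + ∑ t, M₁ v t * M₁ w t * Q₁ t := by
    intro v w
    rw [integral_congr_ae (Filter.Eventually.of_forall
      (fun ω => by rw [hrep₁ v ω, hrep₁ w ω]))]
    exact lc_mul_integral hm₁ hσ₁ hlaw₁ hind₁ _ _ _ _
  have hK2₂ : ∀ v w, ∫ ω, observed hG C₂ v ω * observed hG C₂ w ω ∂C₂.μ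
      = K₂ v * K₂ w + ∑ t, M₂ v t * M₂ w t * Q₂ t := by
    intro v w
    rw [integral_congr_ae (Filter.Eventually.of_forall
      (fun ω => by rw [hrep₂ v ω, hrep₂ w ω]))]
    exact lc_mul_integral hm₂ hσ₂ hlaw₂ hind₂ _ _ _ _
  have hmom2 : ∀ v w, ∫ ω, observed hG C₁ v ω * observed hG C₁ w ω ∂C₁.μ
      = ∫ ω, observed hG C₂ v ω * observed hG C₂ w ω ∂C₂.μ := by
    intro v w
    have gm : Measurable (fun x : V → ℝ => x v * x w) :=
      (measurable_pi_apply v).mul (measurable_pi_apply w)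
    have e₁ : ∫ x, x v * x w ∂(Measure.map T₁ C₁.μ)
        = ∫ ω, observed hG C₁ v ω * observed hG C₁ w ω ∂C₁.μ :=
      integral_map hTm₁.aemeasurable gm.aestronglyMeasurable
    have e₂ : ∫ x, x v * x w ∂(Measure.map T₂ C₂.μ)
        = ∫ ω, observed hG C₂ v ω * observed hG C₂ w ω ∂C₂.μ :=
      integral_map hTm₂.aemeasurable gm.aestronglyMeasurable
    rw [← e₁, ← e₂, hmapeq]
  have hCC : ∀ v w, ∑ t, M₁ v t * M₁ w t * Q₁ t = ∑ t, M₂ v t * M₂ w t * Q₂ t := by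
    intro v w
    have h := hmom2 v w
    rw [hK2₁ v w, hK2₂ v w, hKeq v, hKeq w] at h
    linarith
  have hQpos₁ : ∀ t, 0 < Q₁ t := fun t => eps_sq_integral_pos hm₁ hσ₁ hlaw₁ t
  have hbeq : ∀ v u, b₁ v u = b₂ v u := by
    intro v
    suffices hd : ∀ u, b₁ v u - b₂ v u = 0 by
      intro u
      have := hd u
      linarith
    set d : V → ℝ := fun u => b₁ v u - b₂ v u with hdD
    have hlin : ∀ w, w ≠ v → ¬ Relation.TransGen edge v w →
        ∑ u, d u * ∑ t, M₁ u t * M₁ w t * Q₁ t = 0 := by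
      intro w hwv hvw
      have h1 : ∑ t, M₁ v t * M₁ w t * Q₁ t
          = M₁ w v * Q₁ v + ∑ u, b₁ v u * ∑ t, M₁ u t * M₁ w t * Q₁ t :=
        cov_rel' (hrec₁ v).2
      have h2 : ∑ t, M₂ v t * M₂ w t * Q₂ t
          = M₂ w v * Q₂ v + ∑ u, b₂ v u * ∑ t, M₂ u t * M₂ w t * Q₂ t :=
        cov_rel' (hrec₂ v).2
      rw [hvan₁ w v (Ne.symm hwv) hvw, zero_mul, zero_add] at h1
      rw [hvan₂ w v (Ne.symm hwv) hvw, zero_mul, zero_add] at h2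
      have h2' : ∑ t, M₁ v t * M₁ w t * Q₁ t
          = ∑ u, b₂ v u * ∑ t, M₁ u t * M₁ w t * Q₁ t := by
        rw [hCC v w, h2]
        exact Finset.sum_congr rfl fun u _ => by rw [hCC u w]
      have hsub : ∑ u, d u * ∑ t, M₁ u t * M₁ w t * Q₁ t
          = (∑ u, b₁ v u * ∑ t, M₁ u t * M₁ w t * Q₁ t)
            - ∑ u, b₂ v u * ∑ t, M₁ u t * M₁ w t * Q₁ t := by
        rw [← Finset.sum_sub_distrib]
        exact Finset.sum_congr rfl fun u _ => by simp only [hdD]; ring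
      rw [hsub, ← h1, ← h2', sub_self]
    have hsupp : ∀ u, d u ≠ 0 → (u ≠ v ∧ ¬ Relation.TransGen edge v u) := by
      intro u hu
      have he : edge u v := by
        by_contra he
        exact hu (by simp only [hdD]; rw [hb₁ v u he, hb₂ v u he, sub_self])
      refine ⟨?_, ?_⟩
      · rintro rfl
        exact hG u (Relation.TransGen.single he)
      · intro hvu
        exact hG v (hvu.tail he)
    have hzero : ∀ t, ∑ u, d u * M₁ u t = 0 := by
      have hdd : ∑ w, d w * ∑ u, d u * ∑ t, M₁ u t * M₁ w t * Q₁ t = 0 := by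
        apply Finset.sum_eq_zero
        intro w _
        by_cases hw : d w = 0
        · rw [hw, zero_mul]
        · obtain ⟨hwv, hvw⟩ := hsupp w hw
          rw [hlin w hwv hvw, mul_zero]
      rw [quad_form] at hdd
      have hnn : ∀ t ∈ Finset.univ, 0 ≤ (∑ u, d u * M₁ u t) * (∑ w, d w * M₁ w t) * Q₁ t := by
        intro t _
        have hsq : (∑ u, d u * M₁ u t) * (∑ w, d w * M₁ w t) = (∑ u, d u * M₁ u t)^2 := by
          rw [sq]
        rw [hsq]
        exact mul_nonneg (sq_nonneg _) (hQpos₁ t).le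
      have hterm := (Finset.sum_eq_zero_iff_of_nonneg hnn).mp hdd
      intro t
      have h0 := hterm t (Finset.mem_univ t)
      rcases mul_eq_zero.mp h0 with h | h
      · have hsq : (∑ u, d u * M₁ u t) * (∑ w, d w * M₁ w t) = (∑ u, d u * M₁ u t)^2 := by
          rw [sq]
        rw [hsq] at h
        exact pow_eq_zero_iff (two_ne_zero) |>.mp h
      · exact absurd h (ne_of_gt (hQpos₁ t))
    intro u
    by_contra hu
    have hSne : {u | d u ≠ 0}.Nonempty := ⟨u, hu⟩
    obtain ⟨m, hmS, hmax⟩ := exists_maximal hG hSne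
    have hz := hzero m
    rw [Finset.sum_eq_single m] at hz
    · rw [hdiag₁ m, mul_one] at hz
      exact hmS hz
    · intro u' _ hne'
      by_cases h' : d u' = 0
      · rw [h', zero_mul]
      · rw [hvan₁ u' m (Ne.symm hne') (hmax u' h'), mul_zero]
    · intro hm'
      exact absurd (Finset.mem_univ m) hm'
  have hceq : ∀ v, c₁ v = c₂ v := by
    intro v
    have h1 := (hrec₁ v).1
    have h2 := (hrec₂ v).1
    rw [hKeq v] at h1
    have hS : ∑ u, b₁ v u * K₁ u = ∑ u, b₂ v u * K₂ u :=
      Finset.sum_congr rfl fun u _ => by rw [hbeq v u, hKeq u]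
    rw [hS] at h1
    linarith
  obtain rfl : c₁ = c₂ := funext hceq
  obtain rfl : b₁ = b₂ := funext fun v => funext (hbeq v)
  set F : (V → ℝ) → (↥Y → ℝ) :=
    fun x y => pathFun hG c₁ b₁ A a (y : V) (fun t => x t - c₁ t - ∑ u, b₁ t u * x u)
    with hFdef
  have hEm : Measurable (fun x : V → ℝ => fun t => x t - c₁ t - ∑ u, b₁ t u * x u) :=
    measurable_pi_lambda _ fun t =>
      (((measurable_pi_apply t).sub measurable_const).sub
        (Finset.measurable_sum _ fun u _ => (measurable_pi_apply u).const_mul _))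
  have hFm : Measurable F := measurable_pi_lambda _ fun y =>
    (pathFun_measurable hG c₁ b₁ (y : V) A a).comp hEm
  have heps₁ : ∀ t ω, ε₁ t ω = observed hG C₁ t ω - c₁ t - ∑ u, b₁ t u * observed hG C₁ u ω := by
    intro t ω
    have h := observed_linear hG C₁ hb₁ hf₁ t ω
    linarith
  have heps₂ : ∀ t ω, ε₂ t ω = observed hG C₂ t ω - c₁ t - ∑ u, b₁ t u * observed hG C₂ u ω := by
    intro t ω
    have h := observed_linear hG C₂ hb₂ hf₂ t ω
    linarith
  have hfun₁ : ∀ ω, (fun y : ↥Y => pathResp hG C₁ A a (y : V) ω) = F (T₁ ω) := by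
    intro ω
    funext y
    rw [pathResp_eq_pathFun hG C₁ hf₁ (y : V) A a ω]
    show pathFun hG c₁ b₁ A a (y : V) (fun t => ε₁ t ω)
      = pathFun hG c₁ b₁ A a (y : V) (fun t => T₁ ω t - c₁ t - ∑ u, b₁ t u * T₁ ω u)
    congr 1
    funext t
    exact heps₁ t ω
  have hfun₂ : ∀ ω, (fun y : ↥Y => pathResp hG C₂ A a (y : V) ω) = F (T₂ ω) := by
    intro ω
    funext y
    rw [pathResp_eq_pathFun hG C₂ hf₂ (y : V) A a ω]
    show pathFun hG c₁ b₁ A a (y : V) (fun t => ε₂ t ω)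
      = pathFun hG c₁ b₁ A a (y : V) (fun t => T₂ ω t - c₁ t - ∑ u, b₁ t u * T₂ ω u)
    congr 1
    funext t
    exact heps₂ t ω
  have hset₁ : {ω | (fun y : ↥Y => pathResp hG C₁ A a (y : V) ω) ∈ B}
      = T₁ ⁻¹' (F ⁻¹' B) := by
    ext ω
    rw [Set.mem_setOf_eq, hfun₁ ω]
    rfl
  have hset₂ : {ω | (fun y : ↥Y => pathResp hG C₂ A a (y : V) ω) ∈ B}
      = T₂ ⁻¹' (F ⁻¹' B) := by
    ext ω
    rw [Set.mem_setOf_eq, hfun₂ ω]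
    rfl
  calc C₁.μ {ω | (fun y : ↥Y => pathResp hG C₁ A a (y : V) ω) ∈ B}
      = C₁.μ (T₁ ⁻¹' (F ⁻¹' B)) := by rw [hset₁]
    _ = (Measure.map T₁ C₁.μ) (F ⁻¹' B) := (Measure.map_apply hTm₁ (hFm hB)).symm
    _ = (Measure.map T₂ C₂.μ) (F ⁻¹' B) := by rw [hmapeq]
    _ = C₂.μ (T₂ ⁻¹' (F ⁻¹' B)) := Measure.map_apply hTm₂ (hFm hB)
    _ = C₂.μ {ω | (fun y : ↥Y => pathResp hG C₂ A a (y : V) ω) ∈ B} := by rw [hset₂]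


end CausalHierarchy
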